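/- Let Φ be a finite root system. In the weak order on antisymmetric subsets of Φ, every cover relation changes exactly one element: if R ≼ S is a cover relation among antisymmetric subsets, then either S = R ∖ {α} for some α ∈ R ∩ Φ⁺, or S = R ∪ {β} for some β ∈ Φ⁻ ∖ R. In particular this order is graded by R ↦ |R⁻| - |R⁺|. -/

import Mathlib

open Pointwise

structure RootSys (V : Type*) [NormedAddCommGroup V] [InnerProductSpace ℝ V] where
  Φ : Set V
  finite : Φ.Finite
  nonzero : ∀ α ∈ Φ, α ≠ (0 : V)
  line : ∀ α ∈ Φ, Φ ∩ {x : V | ∃ t : ℝ, x = t • α} = {α, -α}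
  reflect : ∀ α ∈ Φ, ∀ β ∈ Φ, β - (2 * (inner ℝ α β : ℝ) / (inner ℝ α α : ℝ)) • α ∈ Φ

variable {V : Type*} [NormedAddCommGroup V] [InnerProductSpace ℝ V]

/-- `Φ` is crystallographic: `⟨α^∨, β⟩ ∈ ℤ` for all roots `α, β`. -/
def RootSys.IsCrystallographic (R : RootSys V) : Prop :=
  ∀ α ∈ R.Φ, ∀ β ∈ R.Φ, ∃ n : ℤ, 2 * (inner ℝ α β : ℝ) / (inner ℝ α α : ℝ) = (n : ℝ)

/-- A subset `S ⊆ Φ` is closed if it is stable under sums of two elements staying in `Φ`. -/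
def RootSys.IsClosedSubset (R : RootSys V) (S : Set V) : Prop :=
  ∀ α ∈ S, ∀ β ∈ S, α + β ∈ R.Φ → α + β ∈ S

/-- A set of roots is antisymmetric if it never contains both `α` and `-α`. -/
def IsAntisymSet (S : Set V) : Prop := ∀ α ∈ S, -α ∉ S

/-- A `Φ`-poset: an antisymmetric closed subset of `Φ`. -/
def RootSys.IsPoset (R : RootSys V) (S : Set V) : Prop :=
  S ⊆ R.Φ ∧ IsAntisymSet S ∧ R.IsClosedSubset S

/-- Closure: roots that are nonnegative integer combinations (multiset sums) of elements of `T`. -/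
def RootSys.clos (R : RootSys V) (T : Set V) : Set V :=
  {γ ∈ R.Φ | ∃ M : Multiset V, (∀ x ∈ M, x ∈ T) ∧ M.sum = γ}

/-- Nonnegative integer combinations (multiset sums) of elements of `T`. -/
def nncomb (T : Set V) : Set V :=
  {v | ∃ M : Multiset V, (∀ x ∈ M, x ∈ T) ∧ M.sum = v}

/-- A root system equipped with a generic linear functional determining positive roots. -/
structure PosRootSys (V : Type*) [NormedAddCommGroup V] [InnerProductSpace ℝ V]
    extends RootSys V where
  f : V →ₗ[ℝ] ℝ
  generic : ∀ α ∈ Φ, f α ≠ 0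

def PosRootSys.Pos (P : PosRootSys V) : Set V := {α ∈ P.Φ | 0 < P.f α}

def PosRootSys.Neg (P : PosRootSys V) : Set V := {α ∈ P.Φ | P.f α < 0}

/-- The weak order: `R ≼ S` iff `R⁺ ⊇ S⁺` and `R⁻ ⊆ S⁻`. -/
def PosRootSys.wle (P : PosRootSys V) (R S : Set V) : Prop :=
  S ∩ P.Pos ⊆ R ∩ P.Pos ∧ R ∩ P.Neg ⊆ S ∩ P.Neg

/-- `R` is semiclosed if both `R⁺` and `R⁻` are closed. -/
def PosRootSys.SemiClosed (P : PosRootSys V) (S : Set V) : Prop :=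
  S ⊆ P.Φ ∧ P.toRootSys.IsClosedSubset (S ∩ P.Pos) ∧
    P.toRootSys.IsClosedSubset (S ∩ P.Neg)

/-- Negative closure deletion. -/
def PosRootSys.ncd (P : PosRootSys V) (S : Set V) : Set V :=
  S \ {α | α ∈ S ∩ P.Neg ∧ ∃ X : Finset V, ↑X ⊆ S ∩ P.Pos ∧ α + X.sum id ∈ P.Φ \ S}

/-- Positive closure deletion. -/
def PosRootSys.pcd (P : PosRootSys V) (S : Set V) : Set V :=
  S \ {α | α ∈ S ∩ P.Pos ∧ ∃ X : Finset V, ↑X ⊆ S ∩ P.Neg ∧ α + X.sum id ∈ P.Φ \ S}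

/-- Meet formula on closed subsets. -/
def PosRootSys.wmeet (P : PosRootSys V) (R S : Set V) : Set V :=
  P.ncd (P.toRootSys.clos ((R ∪ S) ∩ P.Pos) ∪ ((R ∩ S) ∩ P.Neg))

/-- Join formula on closed subsets. -/
def PosRootSys.wjoin (P : PosRootSys V) (R S : Set V) : Set V :=
  P.pcd (((R ∩ S) ∩ P.Pos) ∪ P.toRootSys.clos ((R ∪ S) ∩ P.Neg))

theorem stmt9 (P : PosRootSys V) (R S : Set V)
    (hR : R ⊆ P.Φ) (hS : S ⊆ P.Φ) (haR : IsAntisymSet R) (haS : IsAntisymSet S)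
    (hle : P.wle R S) (hne : R ≠ S)
    (hcov : ∀ T : Set V, T ⊆ P.Φ → IsAntisymSet T → P.wle R T → P.wle T S →
      T = R ∨ T = S) :
    ((∃ α ∈ R ∩ P.Pos, S = R \ {α}) ∨ (∃ β ∈ P.Neg, β ∉ R ∧ S = R ∪ {β})) ∧
      ((S ∩ P.Neg).ncard : ℤ) - ((S ∩ P.Pos).ncard : ℤ)
        = ((R ∩ P.Neg).ncard : ℤ) - ((R ∩ P.Pos).ncard : ℤ) + 1 := by

  classical
  have hdisj : ∀ x, x ∈ P.Pos → x ∉ P.Neg := by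
    rintro x ⟨_, hp⟩ ⟨_, hn⟩; linarith
  have hfinP : (R ∩ P.Pos).Finite := P.finite.subset (fun x hx => hR hx.1)
  have hfinN : (R ∩ P.Neg).Finite := P.finite.subset (fun x hx => hR hx.1)
  by_cases hα : ∃ α, α ∈ (R ∩ P.Pos) \ (S ∩ P.Pos)
  · obtain ⟨α, hαR, hαS⟩ := hα
    have hT : R \ {α} = S := by
      rcases hcov (R \ {α}) (fun x hx => hR hx.1)
        (fun x hx hx' => haR x hx.1 hx'.1)
        ⟨fun x hx => ⟨hx.1.1, hx.2⟩,
         fun x hx => ⟨⟨hx.1, fun h => hdisj x (h ▸ hαR.2) hx.2⟩, hx.2⟩⟩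
        ⟨fun x hx => ⟨⟨(hle.1 hx).1, fun h => hαS (h ▸ hx)⟩, hx.2⟩,
         fun x hx => hle.2 ⟨hx.1.1, hx.2⟩⟩ with h | h
      · exfalso; have h2 := hαR.1; rw [← h] at h2; exact h2.2 rfl
      · exact h
    have hSP : S ∩ P.Pos = (R ∩ P.Pos) \ {α} := by
      rw [← hT]; ext x; constructor
      · rintro ⟨⟨h1, h2⟩, h3⟩; exact ⟨⟨h1, h3⟩, h2⟩
      · rintro ⟨⟨h1, h2⟩, h3⟩; exact ⟨⟨h1, h3⟩, h2⟩
    have hSN : S ∩ P.Neg = R ∩ P.Neg := by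
      rw [← hT]; ext x; constructor
      · rintro ⟨⟨h1, _⟩, h3⟩; exact ⟨h1, h3⟩
      · rintro ⟨h1, h3⟩
        exact ⟨⟨h1, fun h => hdisj x (h ▸ hαR.2) h3⟩, h3⟩
    have hcardP : (S ∩ P.Pos).ncard + 1 = (R ∩ P.Pos).ncard := by
      rw [hSP]; exact Set.ncard_diff_singleton_add_one hαR hfinP
    refine ⟨Or.inl ⟨α, hαR, hT.symm⟩, ?_⟩
    rw [hSN]; omega
  · push_neg at hα
    have hPosEq : R ∩ P.Pos = S ∩ P.Pos := by
      apply Set.Subset.antisymm _ hle.1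
      intro x hx
      by_contra h
      exact hα x ⟨hx, h⟩
    have hβ : ∃ β, β ∈ (S ∩ P.Neg) \ (R ∩ P.Neg) := by
      by_contra h
      push_neg at h
      have hNegEq : R ∩ P.Neg = S ∩ P.Neg := by
        apply Set.Subset.antisymm hle.2
        intro x hx
        by_contra h'
        exact h x ⟨hx, h'⟩
      apply hne
      ext x
      constructor
      · intro hx
        rcases lt_trichotomy (P.f x) 0 with h1 | h1 | h1
        · have h2 : x ∈ R ∩ P.Neg := ⟨hx, hR hx, h1⟩
          rw [hNegEq] at h2; exact h2.1
        · exact absurd h1 (P.generic x (hR hx))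
        · have h2 : x ∈ R ∩ P.Pos := ⟨hx, hR hx, h1⟩
          rw [hPosEq] at h2; exact h2.1
      · intro hx
        rcases lt_trichotomy (P.f x) 0 with h1 | h1 | h1
        · have h2 : x ∈ S ∩ P.Neg := ⟨hx, hS hx, h1⟩
          rw [← hNegEq] at h2; exact h2.1
        · exact absurd h1 (P.generic x (hS hx))
        · have h2 : x ∈ S ∩ P.Pos := ⟨hx, hS hx, h1⟩
          rw [← hPosEq] at h2; exact h2.1
    obtain ⟨β, hβS, hβR⟩ := hβ
    have hβnR : β ∉ R := fun h => hβR ⟨h, hβS.2⟩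
    have hanti : IsAntisymSet (insert β R) := by
      have hfβ : P.f β < 0 := hβS.2.2
      have hnegβ : -β ∉ R := by
        intro h
        have h1 : -β ∈ R ∩ P.Pos := ⟨h, hR h, by rw [map_neg]; linarith⟩
        rw [hPosEq] at h1
        exact haS β hβS.1 h1.1
      intro x hx hxn
      rcases hx with hxb | hxR
      · rcases hxn with hb | hmem
        · have h2 : P.f (-x) = P.f x := by rw [hb, ← hxb]
          rw [map_neg] at h2
          have hfx : P.f x < 0 := by rw [hxb]; exact hfβ
          linarith
        · rw [hxb] at hmem
          exact hnegβ hmem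
      · rcases hxn with hb | hmem
        · apply hnegβ
          rw [← hb, neg_neg]
          exact hxR
        · exact haR x hxR hmem
    have hT : insert β R = S := by
      rcases hcov (insert β R)
        (fun x hx => by rcases hx with h | hx; exacts [h ▸ hS hβS.1, hR hx])
        hanti
        ⟨fun x hx => by
          rcases hx.1 with h | h
          · exact absurd (h ▸ hx.2) (fun h' => hdisj β h' hβS.2)
          · exact ⟨h, hx.2⟩,
         fun x hx => ⟨Or.inr hx.1, hx.2⟩⟩
        ⟨fun x hx => ⟨Or.inr (hPosEq ▸ hx : x ∈ R ∩ P.Pos).1, hx.2⟩,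
         fun x hx => by
          rcases hx.1 with h | h
          · exact h ▸ hβS
          · exact hle.2 ⟨h, hx.2⟩⟩ with h | h
      · exact absurd (h ▸ (Set.mem_insert β R)) hβnR
      · exact h
    have hSN : S ∩ P.Neg = insert β (R ∩ P.Neg) := by
      rw [← hT]; ext x; constructor
      · rintro ⟨h1, h3⟩
        rcases h1 with h1 | h1
        · exact h1 ▸ Set.mem_insert _ _
        · exact Or.inr ⟨h1, h3⟩
      · rintro (h1 | ⟨h1, h3⟩)
        · subst h1; exact ⟨Set.mem_insert _ _, hβS.2⟩
        · exact ⟨Or.inr h1, h3⟩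
    have hcardN : (S ∩ P.Neg).ncard = (R ∩ P.Neg).ncard + 1 := by
      rw [hSN]; exact Set.ncard_insert_of_notMem hβR hfinN
    refine ⟨Or.inr ⟨β, hβS.2, hβnR, by rw [← hT, Set.union_singleton]⟩, ?_⟩
    rw [← hPosEq]; omega
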